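/- The series σ(y) = ω(y) e_ξ(y), with ω ∈ ℂ[y] \ {0} and ξ ∈ ℂⁿ, is indecomposable: σ cannot be written as σ = σ₁ + σ₂ with Im H_σ = Im H_{σ₁} ⊕ Im H_{σ₂} and both summands nonzero. -/

import Mathlib

noncomputable def Hankel (n : ℕ) (σ : Module.Dual ℂ (MvPolynomial (Fin n) ℂ)) :
    MvPolynomial (Fin n) ℂ →ₗ[ℂ] Module.Dual ℂ (MvPolynomial (Fin n) ℂ) :=
  (LinearMap.llcomp ℂ (MvPolynomial (Fin n) ℂ) (MvPolynomial (Fin n) ℂ) ℂ σ).comp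
    (LinearMap.mul ℂ (MvPolynomial (Fin n) ℂ))

/-- The differential operator `∂^β = ∂₁^{β₁} ⋯ ∂ₙ^{βₙ}` on `ℂ[x₁,…,xₙ]`. -/
noncomputable def pderivPow (n : ℕ) (β : Fin n →₀ ℕ) :
    Module.End ℂ (MvPolynomial (Fin n) ℂ) :=
  (List.ofFn fun i : Fin n =>
    ((MvPolynomial.pderiv i).toLinearMap :
        Module.End ℂ (MvPolynomial (Fin n) ℂ)) ^ (β i)).prod

/-- The polynomial-exponential series `ω(y) e_ξ(y)` viewed as the linear functional
`p ↦ Σ_β ω_β (∂^β p)(ξ)` on `ℂ[x]` (its moments are `⟨ω e_ξ | x^α⟩`). -/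
noncomputable def polyExp (n : ℕ) (ω : MvPolynomial (Fin n) ℂ) (ξ : Fin n → ℂ) :
    Module.Dual ℂ (MvPolynomial (Fin n) ℂ) :=
  ∑ β ∈ ω.support, MvPolynomial.coeff β ω •
    ((MvPolynomial.aeval ξ).toLinearMap ∘ₗ pderivPow n β)

/-- `μ(ω)`: the dimension of the space spanned by `ω` and all its partial
derivatives of all orders. -/
noncomputable def mu (n : ℕ) (ω : MvPolynomial (Fin n) ℂ) : ℕ :=
  Module.finrank ℂ
    ↥(Submodule.span ℂ (Set.range fun β : Fin n →₀ ℕ => pderivPow n β ω))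


namespace Stmt6Aux

open MvPolynomial LinearMap

abbrev R (n : ℕ) := MvPolynomial (Fin n) ℂ

variable {n : ℕ}

/-- coefficient formula for pderiv -/
lemma coeff_pderiv (i : Fin n) (p : R n) (γ : Fin n →₀ ℕ) :
    MvPolynomial.coeff γ (pderiv i p)
      = ((γ i + 1 : ℕ) : ℂ) * MvPolynomial.coeff (γ + Finsupp.single i 1) p := by
  induction p using MvPolynomial.induction_on' with
  | add f g hf hg => simp [hf, hg, mul_add]
  | monomial s a =>
    rw [pderiv_monomial, coeff_monomial, coeff_monomial]
    by_cases h : s = γ + Finsupp.single i 1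
    · subst h
      rw [if_pos, if_pos rfl]
      · push_cast
        simp [mul_comm]
      · ext j
        by_cases hj : j = i <;> simp [hj]
    · rw [if_neg h]
      by_cases h2 : s - Finsupp.single i 1 = γ
      · rw [if_pos h2, mul_zero]
        by_cases hsi : s i = 0
        · simp [hsi]
        · exfalso
          apply h
          rw [← h2]
          ext j
          by_cases hj : j = i
          · subst hj
            simp [Nat.sub_add_cancel (Nat.one_le_iff_ne_zero.mpr hsi)]
          · simp [hj, Finsupp.single_eq_of_ne' (Ne.symm hj)]
      · rw [if_neg h2]
        simp

lemma pderiv_comm' (i j : Fin n) (p : R n) :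
    pderiv i (pderiv j p) = pderiv j (pderiv i p) := by
  have hX : ∀ (a b : Fin n) (k : Fin n), pderiv a (pderiv b (X k : R n)) = 0 := by
    intro a b k
    rcases eq_or_ne k b with rfl | h
    · simp
    · simp [pderiv_X_of_ne h]
  induction p using MvPolynomial.induction_on with
  | C a => simp
  | add p q hp hq => simp [hp, hq]
  | mul_X p k hp =>
    simp only [pderiv_mul, map_add, hp, hX]
    ring

lemma totalDegree_pderiv_lt (i : Fin n) (p : R n) (h : pderiv i p ≠ 0) :
    (pderiv i p).totalDegree < p.totalDegree := by
  have key : ∀ γ ∈ (pderiv i p).support, (γ.sum fun _ m => m) < p.totalDegree := by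
    intro γ hγ
    rw [MvPolynomial.mem_support_iff, coeff_pderiv] at hγ
    have h2 : MvPolynomial.coeff (γ + Finsupp.single i 1) p ≠ 0 := by
      intro h0; rw [h0, mul_zero] at hγ; exact hγ rfl
    have h3 := MvPolynomial.le_totalDegree (MvPolynomial.mem_support_iff.mpr h2)
    have h4 : ((γ + Finsupp.single i 1).sum fun _ m => m) = (γ.sum fun _ m => m) + 1 := by
      rw [Finsupp.sum_add_index' (fun _ => rfl) (fun _ _ _ => rfl)]
      simp [Finsupp.sum_single_index]
    omega
  obtain ⟨γ₀, hγ₀⟩ := MvPolynomial.support_nonempty.mpr h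
  have hpos : 0 < p.totalDegree := lt_of_le_of_lt (Nat.zero_le _) (key γ₀ hγ₀)
  rw [MvPolynomial.totalDegree]
  exact (Finset.sup_lt_iff (by simpa using hpos)).mpr key

lemma eq_C_of_pderiv_eq_zero (p : R n) (h : ∀ i, pderiv i p = 0) :
    p = C (MvPolynomial.coeff 0 p) := by
  ext β
  rcases eq_or_ne β 0 with rfl | hβ
  · simp
  · rw [MvPolynomial.coeff_C, if_neg (Ne.symm hβ)]
    obtain ⟨i, hi⟩ : ∃ i, β i ≠ 0 := by
      by_contra hc
      push_neg at hc
      exact hβ (Finsupp.ext hc)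
    have hcp := coeff_pderiv i p (β - Finsupp.single i 1)
    rw [h i] at hcp
    have hadd : (β - Finsupp.single i 1) + Finsupp.single i 1 = β := by
      ext j
      by_cases hj : j = i
      · subst hj
        simp [Nat.sub_add_cancel (Nat.one_le_iff_ne_zero.mpr hi)]
      · simp [hj, Finsupp.single_eq_of_ne' (Ne.symm hj)]
    rw [hadd] at hcp
    simp only [map_zero, MvPolynomial.coeff_zero] at hcp
    rcases mul_eq_zero.mp hcp.symm with hc | hc
    · rw [Nat.cast_add, Nat.cast_one] at hc
      exact absurd hc (Nat.cast_add_one_ne_zero _)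
    · exact hc


lemma ofFn_prod_mul {M : Type*} [Monoid M] :
    ∀ {m : ℕ} (f g : Fin m → M), (∀ i j, Commute (f i) (g j)) →
      (List.ofFn fun i => f i * g i).prod = (List.ofFn f).prod * (List.ofFn g).prod := by
  intro m
  induction m with
  | zero => simp
  | succ k ih =>
    intro f g h
    rw [List.ofFn_succ, List.ofFn_succ, List.ofFn_succ, List.prod_cons, List.prod_cons,
      List.prod_cons]
    have := ih (fun i => f i.succ) (fun i => g i.succ) (fun i j => h _ _)
    rw [this]
    have hc : Commute (g 0) (List.ofFn fun i : Fin k => f i.succ).prod := by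
      apply Commute.list_prod_right
      intro x hx
      rw [List.mem_ofFn] at hx
      obtain ⟨i, rfl⟩ := hx
      exact (h _ _).symm
    rw [mul_assoc, mul_assoc, ← mul_assoc (g 0), hc.eq, mul_assoc]

lemma ofFn_prod_eq_single {M : Type*} [Monoid M] :
    ∀ {m : ℕ} (f : Fin m → M) (i : Fin m), (∀ j, j ≠ i → f j = 1) →
      (List.ofFn f).prod = f i := by
  intro m
  induction m with
  | zero => exact fun f i => i.elim0
  | succ k ih =>
    intro f i h
    rw [List.ofFn_succ, List.prod_cons]
    rcases Fin.eq_zero_or_eq_succ i with rfl | ⟨i', rfl⟩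
    · have h1 : ∀ x ∈ List.ofFn fun i : Fin k => f i.succ, x = 1 := by
        intro x hx
        rw [List.mem_ofFn] at hx
        obtain ⟨j, rfl⟩ := hx
        exact h _ (Fin.succ_ne_zero j)
      rw [List.prod_eq_one h1, mul_one]
    · rw [h 0 (Ne.symm (Fin.succ_ne_zero i')), one_mul]
      exact ih (fun i => f i.succ) i' fun j hj => h _ (by simpa [Fin.succ_inj] using hj)

noncomputable def cE (i : Fin n) : Module.End ℂ (R n) := (pderiv i).toLinearMap

lemma commute_cE (i j : Fin n) : Commute (cE i) (cE j) := by
  apply LinearMap.ext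
  intro p
  exact pderiv_comm' i j p

lemma pderivPow_eq (β : Fin n →₀ ℕ) :
    pderivPow n β = (List.ofFn fun i : Fin n => cE i ^ (β i)).prod := rfl

lemma pderivPow_add (a b : Fin n →₀ ℕ) :
    pderivPow n (a + b) = pderivPow n a * pderivPow n b := by
  rw [pderivPow_eq, pderivPow_eq, pderivPow_eq]
  have h1 : (fun i : Fin n => cE i ^ ((a + b) i))
      = fun i : Fin n => cE i ^ (a i) * cE i ^ (b i) := by
    funext i
    rw [Finsupp.add_apply, pow_add]
  rw [h1]
  exact ofFn_prod_mul _ _ fun i j => (commute_cE i j).pow_pow _ _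

lemma pderivPow_zero' : pderivPow n 0 = 1 := by
  rw [pderivPow_eq]
  have : (fun i : Fin n => cE i ^ ((0 : Fin n →₀ ℕ) i)) = fun _ => 1 := by
    funext i; simp
  rw [this, List.ofFn_const, List.prod_replicate, one_pow]

lemma pderivPow_single (i : Fin n) (k : ℕ) :
    pderivPow n (Finsupp.single i k) = cE i ^ k := by
  rw [pderivPow_eq]
  have := ofFn_prod_eq_single (fun j : Fin n => cE j ^ (Finsupp.single i k j)) i ?_
  · rw [this, Finsupp.single_eq_same]
  · intro j hj
    show cE j ^ (Finsupp.single i k j) = 1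
    rw [Finsupp.single_eq_of_ne' (Ne.symm hj), pow_zero]


lemma weyl {A : Type*} [Ring A] {a b : A} (h : a * b = b * a + 1) (m : ℕ) :
    a ^ (m + 1) * b = b * a ^ (m + 1) + (m + 1) • a ^ m := by
  induction m with
  | zero => simpa using h
  | succ k ih =>
    calc a ^ (k + 2) * b = a * (a ^ (k + 1) * b) := by
          rw [← mul_assoc, ← pow_succ']
      _ = a * (b * a ^ (k + 1) + (k + 1) • a ^ k) := by rw [ih]
      _ = (a * b) * a ^ (k + 1) + (k + 1) • (a * a ^ k) := by
          rw [mul_add, ← mul_assoc, mul_smul_comm]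
      _ = (b * a + 1) * a ^ (k + 1) + (k + 1) • a ^ (k + 1) := by rw [h, ← pow_succ']
      _ = b * a ^ (k + 2) + a ^ (k + 1) + (k + 1) • a ^ (k + 1) := by
          rw [add_mul, one_mul, mul_assoc, ← pow_succ']
      _ = b * a ^ (k + 2) + (k + 2) • a ^ (k + 1) := by
          rw [succ_nsmul (a ^ (k + 1)) (k + 1), add_assoc, add_comm (a ^ (k + 1))]

noncomputable def Mop (g : R n) : Module.End ℂ (R n) := LinearMap.mul ℂ (R n) g

lemma Mop_apply (g q : R n) : Mop g q = g * q := rfl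

lemma cE_apply (i : Fin n) (p : R n) : cE i p = pderiv i p := rfl

lemma cE_mul_Mop (ξ : Fin n → ℂ) (j i : Fin n) :
    cE j * Mop (X i - C (ξ i)) =
      Mop (X i - C (ξ i)) * cE j + (if j = i then 1 else 0) := by
  rcases eq_or_ne j i with rfl | hne
  · rw [if_pos rfl]
    apply LinearMap.ext
    intro q
    rw [Module.End.mul_apply, LinearMap.add_apply, Module.End.mul_apply, Module.End.one_apply,
      cE_apply, cE_apply, Mop_apply, Mop_apply, pderiv_mul]
    simp
    ring
  · rw [if_neg hne, add_zero]
    apply LinearMap.ext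
    intro q
    rw [Module.End.mul_apply, Module.End.mul_apply, cE_apply, cE_apply, Mop_apply, Mop_apply,
      pderiv_mul]
    simp [pderiv_X_of_ne (Ne.symm hne)]

lemma pderivPow_mul_Mop (ξ : Fin n → ℂ) (β : Fin n →₀ ℕ) (i : Fin n) :
    pderivPow n β * Mop (X i - C (ξ i)) =
      Mop (X i - C (ξ i)) * pderivPow n β
        + (β i) • pderivPow n (β - Finsupp.single i 1) := by
  set A := Mop (X i - C (ξ i)) with hA
  have hcomm : ∀ j, j ≠ i → Commute (cE j) A := by
    intro j hj
    have := cE_mul_Mop ξ j i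
    rw [if_neg hj, add_zero] at this
    exact this
  have hAcomm : Commute A (pderivPow n (β.erase i)) := by
    rw [pderivPow_eq]
    apply Commute.list_prod_right
    intro x hx
    rw [List.mem_ofFn] at hx
    obtain ⟨j, rfl⟩ := hx
    show Commute A (cE j ^ (β.erase i j))
    rcases eq_or_ne j i with rfl | hj
    · rw [Finsupp.erase_same, pow_zero]
      exact Commute.one_right _
    · exact ((hcomm j hj).symm.pow_right _)
  have hD : pderivPow n β = pderivPow n (β.erase i) * cE i ^ (β i) := by
    rw [← pderivPow_single, ← pderivPow_add, Finsupp.erase_add_single]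
  cases hm : β i with
  | zero =>
    have herase : β.erase i = β := by
      ext j
      rcases eq_or_ne j i with rfl | hj
      · rw [Finsupp.erase_same, hm]
      · rw [Finsupp.erase_ne hj]
    have hc2 : Commute A (pderivPow n β) := herase ▸ hAcomm
    rw [zero_smul, add_zero]
    exact hc2.eq.symm
  | succ k =>
    have hwi : cE i * A = A * cE i + 1 := by
      have := cE_mul_Mop ξ i i
      rwa [if_pos rfl] at this
    have key := weyl hwi k
    have hsub : β - Finsupp.single i 1 = β.erase i + Finsupp.single i k := by
      ext j
      rcases eq_or_ne j i with rfl | hj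
      · simp [Finsupp.erase_same, hm]
      · simp [Finsupp.erase_ne hj, Finsupp.single_eq_of_ne' (Ne.symm hj)]
    calc pderivPow n β * A
        = pderivPow n (β.erase i) * (cE i ^ (k + 1) * A) := by
          rw [hD, hm, mul_assoc]
      _ = pderivPow n (β.erase i) * (A * cE i ^ (k + 1) + (k + 1) • cE i ^ k) := by
          rw [key]
      _ = (pderivPow n (β.erase i) * A) * cE i ^ (k + 1)
            + (k + 1) • (pderivPow n (β.erase i) * cE i ^ k) := by
          rw [mul_add, ← mul_assoc, mul_smul_comm]
      _ = A * pderivPow n β + (k + 1) • pderivPow n (β - Finsupp.single i 1) := by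
          rw [hD, hm, hsub, pderivPow_add, pderivPow_single, ← hAcomm.eq, mul_assoc]


noncomputable def Emap (ξ : Fin n → ℂ) (β : Fin n →₀ ℕ) : Module.Dual ℂ (R n) :=
  (aeval ξ).toLinearMap ∘ₗ pderivPow n β

lemma Emap_apply (ξ : Fin n → ℂ) (β : Fin n →₀ ℕ) (q : R n) :
    Emap ξ β q = aeval ξ (pderivPow n β q) := rfl

noncomputable def Pmap (n : ℕ) (ξ : Fin n → ℂ) : R n →ₗ[ℂ] Module.Dual ℂ (R n) :=
  (Finsupp.lsum ℂ fun β => LinearMap.toSpanSingleton ℂ _ (Emap ξ β)) ∘ₗ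
    (AddMonoidAlgebra.coeffLinearEquiv ℂ).toLinearMap

lemma Pmap_monomial (ξ : Fin n → ℂ) (β : Fin n →₀ ℕ) (c : ℂ) :
    Pmap n ξ (monomial β c) = c • Emap ξ β := by
  rw [Pmap, ← MvPolynomial.single_eq_monomial, LinearMap.comp_apply, LinearEquiv.coe_coe,
    AddMonoidAlgebra.coeffLinearEquiv_apply, AddMonoidAlgebra.coeff_single]
  erw [Finsupp.lsum_single]
  rfl

lemma Pmap_eq_polyExp (ξ : Fin n → ℂ) (ω : R n) : Pmap n ξ ω = polyExp n ω ξ := by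
  rw [Pmap, polyExp]
  rfl

lemma Emap_zero (ξ : Fin n → ℂ) : Emap ξ 0 = (aeval ξ).toLinearMap := by
  rw [Emap, pderivPow_zero']
  rfl


lemma aeval_g (ξ : Fin n → ℂ) (i : Fin n) (q : R n) :
    aeval ξ ((X i - C (ξ i)) * q) = 0 := by
  rw [map_mul]
  simp

lemma star (ξ : Fin n → ℂ) (i : Fin n) (ω' : R n) :
    (Pmap n ξ ω').comp (LinearMap.mul ℂ (R n) (X i - C (ξ i))) = Pmap n ξ (pderiv i ω') := by
  induction ω' using MvPolynomial.induction_on' with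
  | add f g hf hg => rw [map_add, LinearMap.add_comp, hf, hg, map_add, map_add]
  | monomial s a =>
    apply LinearMap.ext
    intro q
    rw [LinearMap.comp_apply, pderiv_monomial, Pmap_monomial, Pmap_monomial]
    have hc : pderivPow n s ((X i - C (ξ i)) * q)
        = (X i - C (ξ i)) * pderivPow n s q
          + (s i) • (pderivPow n (s - Finsupp.single i 1) q) := by
      have h0 := congrArg (fun T : Module.End ℂ (R n) => T q) (pderivPow_mul_Mop ξ s i)
      simpa [Module.End.mul_apply, Mop_apply] using h0
    have hmul : LinearMap.mul ℂ (R n) (X i - C (ξ i)) q = (X i - C (ξ i)) * q := rfl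
    rw [LinearMap.smul_apply, LinearMap.smul_apply, hmul, Emap_apply, hc, map_add, aeval_g,
      zero_add, map_nsmul, Emap_apply]
    rw [← Nat.cast_smul_eq_nsmul ℂ, smul_smul]


lemma hankel_apply' (σ : Module.Dual ℂ (R n)) (p : R n) :
    Hankel n σ p = σ.comp (LinearMap.mul ℂ (R n) p) := rfl

lemma hankel_one (σ : Module.Dual ℂ (R n)) : Hankel n σ 1 = σ := by
  apply LinearMap.ext
  intro q
  show σ (1 * q) = σ q
  rw [one_mul]

lemma range_hankel_closed (σ : Module.Dual ℂ (R n)) (g : R n) :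
    ∀ τ ∈ LinearMap.range (Hankel n σ),
      τ.comp (LinearMap.mul ℂ (R n) g) ∈ LinearMap.range (Hankel n σ) := by
  rintro τ ⟨p, rfl⟩
  refine ⟨p * g, ?_⟩
  apply LinearMap.ext
  intro q
  show σ ((p * g) * q) = σ (p * (g * q))
  rw [mul_assoc]

lemma comp_mul_C (σ : Module.Dual ℂ (R n)) (c : ℂ) :
    σ.comp (LinearMap.mul ℂ (R n) (C c)) = c • σ := by
  apply LinearMap.ext
  intro q
  show σ (C c * q) = c • σ q
  rw [C_mul', map_smul]

lemma hankel_mem_range_Pmap (ξ : Fin n → ℂ) (p : R n) :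
    ∀ ω' : R n, ∃ ω'' : R n,
      (Pmap n ξ ω').comp (LinearMap.mul ℂ (R n) p) = Pmap n ξ ω'' := by
  induction p using MvPolynomial.induction_on with
  | C a =>
    intro ω'
    exact ⟨a • ω', by rw [comp_mul_C, map_smul]⟩
  | add p q hp hq =>
    intro ω'
    obtain ⟨ω₁, h₁⟩ := hp ω'
    obtain ⟨ω₂, h₂⟩ := hq ω'
    refine ⟨ω₁ + ω₂, ?_⟩
    rw [map_add, LinearMap.comp_add, h₁, h₂, map_add]
  | mul_X p i hp =>
    intro ω'
    have hsplit : (Pmap n ξ ω').comp (LinearMap.mul ℂ (R n) (p * X i))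
        = ((Pmap n ξ ω').comp (LinearMap.mul ℂ (R n) (X i))).comp
            (LinearMap.mul ℂ (R n) p) := by
      apply LinearMap.ext
      intro q
      show Pmap n ξ ω' ((p * X i) * q) = Pmap n ξ ω' (X i * (p * q))
      ring_nf
    have hXi : (Pmap n ξ ω').comp (LinearMap.mul ℂ (R n) (X i))
        = Pmap n ξ (pderiv i ω' + ξ i • ω') := by
      have hdecomp : (X i : R n) = (X i - C (ξ i)) + C (ξ i) := by ring
      rw [hdecomp, map_add, LinearMap.comp_add, star, comp_mul_C, map_add, map_smul]
    obtain ⟨ω'', h''⟩ := hp (pderiv i ω' + ξ i • ω')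
    exact ⟨ω'', by rw [hsplit, hXi, h'']⟩


lemma descent (ξ : Fin n → ℂ) (U : Submodule ℂ (Module.Dual ℂ (R n)))
    (hU : ∀ τ ∈ U, ∀ i : Fin n,
      τ.comp (LinearMap.mul ℂ (R n) (X i - C (ξ i))) ∈ U) :
    ∀ d (ω' : R n), ω'.totalDegree ≤ d → ω' ≠ 0 → Pmap n ξ ω' ∈ U →
      (aeval ξ).toLinearMap ∈ U := by
  intro d
  induction d using Nat.strong_induction_on with
  | _ d ih =>
    intro ω' hdeg hne hmem
    by_cases hconst : ∀ i, pderiv i ω' = 0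
    · have hC := eq_C_of_pderiv_eq_zero ω' hconst
      have hc0 : MvPolynomial.coeff 0 ω' ≠ 0 := by
        intro h0
        apply hne
        rw [hC, h0, map_zero]
      have hPC : Pmap n ξ ω' = (MvPolynomial.coeff 0 ω') • (aeval ξ).toLinearMap := by
        conv_lhs => rw [hC]
        rw [MvPolynomial.C_apply, Pmap_monomial, Emap_zero]
      have hsm := U.smul_mem (MvPolynomial.coeff 0 ω')⁻¹ hmem
      rw [hPC, smul_smul, inv_mul_cancel₀ hc0, one_smul] at hsm
      exact hsm
    · push_neg at hconst
      obtain ⟨i, hi⟩ := hconst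
      have hlt := totalDegree_pderiv_lt i ω' hi
      have hmem' : Pmap n ξ (pderiv i ω') ∈ U := by
        rw [← star]
        exact hU _ hmem i
      exact ih (pderiv i ω').totalDegree (by omega) _ le_rfl hi hmem'

lemma aeval_ne_zero (ξ : Fin n → ℂ) :
    ((aeval ξ).toLinearMap : Module.Dual ℂ (R n)) ≠ 0 := by
  intro h
  have h1 : aeval ξ (1 : R n) = (0 : ℂ) := by
    rw [show aeval ξ (1 : R n) = ((aeval ξ).toLinearMap : Module.Dual ℂ (R n)) 1 from rfl, h]
    rfl
  rw [map_one] at h1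
  exact one_ne_zero h1

end Stmt6Aux

/-- `ω(y) e_ξ(y)` with `ω ≠ 0` is indecomposable: it cannot be written as
`σ₁ + σ₂` with both summands nonzero and `Im H_σ = Im H_{σ₁} ⊕ Im H_{σ₂}`. -/
theorem stmt6 (n : ℕ) (ω : MvPolynomial (Fin n) ℂ) (hω : ω ≠ 0) (ξ : Fin n → ℂ) :
    ¬ ∃ σ₁ σ₂ : Module.Dual ℂ (MvPolynomial (Fin n) ℂ),
        polyExp n ω ξ = σ₁ + σ₂ ∧ σ₁ ≠ 0 ∧ σ₂ ≠ 0 ∧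
        LinearMap.range (Hankel n (polyExp n ω ξ)) =
          LinearMap.range (Hankel n σ₁) ⊔ LinearMap.range (Hankel n σ₂) ∧
        LinearMap.range (Hankel n σ₁) ⊓ LinearMap.range (Hankel n σ₂) = ⊥ := by
  classical
  open Stmt6Aux MvPolynomial in
  rintro ⟨σ₁, σ₂, hsum, h1, h2, hsup, hinf⟩
  have key : ∀ σ' : Module.Dual ℂ (MvPolynomial (Fin n) ℂ), σ' ≠ 0 →
      LinearMap.range (Hankel n σ') ≤ LinearMap.range (Hankel n (polyExp n ω ξ)) →
      (aeval ξ).toLinearMap ∈ LinearMap.range (Hankel n σ') := by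
    intro σ' hne hle
    have hσ'mem : σ' ∈ LinearMap.range (Hankel n σ') := ⟨1, hankel_one σ'⟩
    obtain ⟨p, hp⟩ := hle hσ'mem
    rw [hankel_apply', ← Pmap_eq_polyExp] at hp
    obtain ⟨ω'', hω''⟩ := hankel_mem_range_Pmap ξ p ω
    rw [hω''] at hp
    have hω''ne : ω'' ≠ 0 := by
      intro h0
      rw [h0, map_zero] at hp
      exact hne hp.symm
    apply descent ξ (LinearMap.range (Hankel n σ'))
      (fun τ hτ i => range_hankel_closed σ' _ τ hτ)
      ω''.totalDegree ω'' le_rfl hω''ne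
    rw [hp]
    exact hσ'mem
  have e1 := key σ₁ h1 (hsup ▸ le_sup_left)
  have e2 := key σ₂ h2 (hsup ▸ le_sup_right)
  have hbot : (aeval ξ).toLinearMap ∈
      (LinearMap.range (Hankel n σ₁) ⊓ LinearMap.range (Hankel n σ₂)) := ⟨e1, e2⟩
  rw [hinf] at hbot
  exact Stmt6Aux.aeval_ne_zero ξ (Submodule.mem_bot ℂ |>.mp hbot)
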